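/- arXiv:2303.09191 — 6 statements merged into one kernel-verified Lean document; each statement's English description precedes it below -/
import Mathlib

section
/- For a spherical bigon determined by radii r₁, r₂ ∈ (0, π/2) and intersection angle θ ∈ (0, π/2], the symmetry ∂l₁/∂k₂ = ∂l₂/∂k₁ holds, where kᵢ = cot(rᵢ) and lᵢ = 2βᵢ·sin(rᵢ) are the arc lengths. -/
open Real Set

/-- The inverse cotangent, valued in `(0, π)`. -/
noncomputable def arccot (x : ℝ) : ℝ := π / 2 - Real.arctan x

lemma hasDerivAt_arccot (x : ℝ) : HasDerivAt arccot (-(1 / (1 + x ^ 2))) x := by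
  unfold arccot
  simpa using (Real.hasDerivAt_arctan x).const_sub (π / 2)

lemma deriv_bigon_arc (s c t : ℝ) (ht : t ≠ 0) (k : ℝ) :
    deriv (fun k => 2 * arccot ((k * s + c) / t) * s) k
      = -(2 * s ^ 2 / (t * (1 + ((k * s + c) / t) ^ 2))) := by
  have h1 : HasDerivAt (fun k : ℝ => (k * s + c) / t) (s / t) k := by
    simpa using (((hasDerivAt_id k).mul_const s).add_const c).div_const t
  have h2 := (hasDerivAt_arccot ((k * s + c) / t)).comp k h1
  have h3 := (h2.const_mul 2).mul_const s
  have h3' : HasDerivAt (fun k => 2 * arccot ((k * s + c) / t) * s)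
      (2 * (-(1 / (1 + ((k * s + c) / t) ^ 2)) * (s / t)) * s) k := by
    simpa [Function.comp] using h3
  rw [h3'.deriv]
  have hpos : (1 : ℝ) + ((k * s + c) / t) ^ 2 ≠ 0 := by positivity
  field_simp

/-- For a spherical bigon with radii `r₁, r₂ ∈ (0, π/2)` and intersection angle
`θ ∈ (0, π/2]`, with `kᵢ = cot rᵢ`, the half-angle `βᵢ` at the center `vᵢ` given by
`cot βᵢ = (k_{3-i} sin rᵢ + cos rᵢ cos θ)/sin θ` and arc lengths `lᵢ = 2 βᵢ sin rᵢ`,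
the symmetry `∂l₁/∂k₂ = ∂l₂/∂k₁` holds. -/
theorem bigon_arc_length_symmetry (r₁ r₂ θ : ℝ)
    (hr₁ : r₁ ∈ Ioo 0 (π / 2)) (hr₂ : r₂ ∈ Ioo 0 (π / 2)) (hθ : θ ∈ Ioc 0 (π / 2))
    (l₁ l₂ : ℝ → ℝ)
    (hl₁ : ∀ k, l₁ k =
      2 * arccot ((k * Real.sin r₁ + Real.cos r₁ * Real.cos θ) / Real.sin θ) * Real.sin r₁)
    (hl₂ : ∀ k, l₂ k =
      2 * arccot ((k * Real.sin r₂ + Real.cos r₂ * Real.cos θ) / Real.sin θ) * Real.sin r₂) :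
    deriv l₁ (Real.cot r₂) = deriv l₂ (Real.cot r₁) := by
  obtain ⟨hr₁0, hr₁2⟩ := hr₁
  obtain ⟨hr₂0, hr₂2⟩ := hr₂
  obtain ⟨hθ0, hθ2⟩ := hθ
  have hs₁ : 0 < Real.sin r₁ := Real.sin_pos_of_pos_of_lt_pi hr₁0 (lt_trans hr₁2 (by linarith [Real.pi_pos]))
  have hs₂ : 0 < Real.sin r₂ := Real.sin_pos_of_pos_of_lt_pi hr₂0 (lt_trans hr₂2 (by linarith [Real.pi_pos]))
  have hsθ : 0 < Real.sin θ := Real.sin_pos_of_pos_of_lt_pi hθ0 (lt_of_le_of_lt hθ2 (by linarith [Real.pi_pos]))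
  set s₁ := Real.sin r₁
  set s₂ := Real.sin r₂
  set c₁ := Real.cos r₁
  set c₂ := Real.cos r₂
  set sθ := Real.sin θ
  set cθ := Real.cos θ
  set D := sθ ^ 2 * s₂ ^ 2 + (c₂ * s₁ + c₁ * cθ * s₂) ^ 2 with hD
  have hDpos : 0 < D := by positivity
  have key : sθ ^ 2 * s₁ ^ 2 + (c₁ * s₂ + c₂ * cθ * s₁) ^ 2 = D := by
    have p₁ : s₁ ^ 2 + c₁ ^ 2 = 1 := Real.sin_sq_add_cos_sq r₁
    have p₂ : s₂ ^ 2 + c₂ ^ 2 = 1 := Real.sin_sq_add_cos_sq r₂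
    have pθ : sθ ^ 2 + cθ ^ 2 = 1 := Real.sin_sq_add_cos_sq θ
    rw [hD]
    linear_combination (s₁ ^ 2 - s₂ ^ 2) * pθ + (cθ ^ 2 * s₁ ^ 2 - s₁ ^ 2) * p₂ +
      (s₂ ^ 2 - cθ ^ 2 * s₂ ^ 2) * p₁
  have hcot₁ : Real.cot r₁ = c₁ / s₁ := Real.cot_eq_cos_div_sin r₁
  have hcot₂ : Real.cot r₂ = c₂ / s₂ := Real.cot_eq_cos_div_sin r₂
  have hL₁ : l₁ = fun k => 2 * arccot ((k * s₁ + c₁ * cθ) / sθ) * s₁ := funext hl₁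
  have hL₂ : l₂ = fun k => 2 * arccot ((k * s₂ + c₂ * cθ) / sθ) * s₂ := funext hl₂
  rw [hL₁, hL₂, deriv_bigon_arc _ _ _ hsθ.ne', deriv_bigon_arc _ _ _ hsθ.ne',
    hcot₁, hcot₂]
  have h₁ : sθ * (1 + ((c₂ / s₂ * s₁ + c₁ * cθ) / sθ) ^ 2) = D / (sθ * s₂ ^ 2) := by
    rw [hD]; field_simp
  have h₂ : sθ * (1 + ((c₁ / s₁ * s₂ + c₂ * cθ) / sθ) ^ 2) = D / (sθ * s₁ ^ 2) := by
    rw [← key]; field_simp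
  rw [h₁, h₂, div_div_eq_mul_div, div_div_eq_mul_div]
  ring
end

section
/- With Kᵢ = ln(kᵢ) = ln(cot rᵢ) and total geodesic curvatures Lᵢ = kᵢ·lᵢ on a spherical bigon, the partial derivative ∂L₁/∂K₂ equals k₁·k₂·(-2·sin²(β₁)·sin²(r₁))/sin(θ), which is strictly negative. -/
open Real Set

/-- On a spherical bigon with `Kᵢ = ln kᵢ = ln (cot rᵢ)` and total geodesic
curvatures `Lᵢ = kᵢ lᵢ`, the partial derivative `∂L₁/∂K₂` equals
`k₁ k₂ (-2 sin²β₁ sin²r₁)/sin θ`, which is strictly negative. -/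
theorem dL1_dK2_neg (r₁ r₂ θ k₁ k₂ β₁ : ℝ)
    (hr₁ : r₁ ∈ Ioo 0 (π / 2)) (hr₂ : r₂ ∈ Ioo 0 (π / 2)) (hθ : θ ∈ Ioc 0 (π / 2))
    (hk₁ : k₁ = Real.cot r₁) (hk₂ : k₂ = Real.cot r₂)
    (hβ₁ : β₁ = arccot ((k₂ * Real.sin r₁ + Real.cos r₁ * Real.cos θ) / Real.sin θ))
    (L₁ : ℝ → ℝ)
    (hL₁ : ∀ K : ℝ, L₁ K = k₁ *
      (2 * arccot ((Real.exp K * Real.sin r₁ + Real.cos r₁ * Real.cos θ) / Real.sin θ)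
        * Real.sin r₁)) :
    HasDerivAt L₁ (k₁ * k₂ * (-2 * (Real.sin β₁)^2 * (Real.sin r₁)^2) / Real.sin θ)
      (Real.log k₂) ∧
    k₁ * k₂ * (-2 * (Real.sin β₁)^2 * (Real.sin r₁)^2) / Real.sin θ < 0 := by
  obtain ⟨hr₁0, hr₁π⟩ := hr₁
  obtain ⟨hr₂0, hr₂π⟩ := hr₂
  obtain ⟨hθ0, hθπ⟩ := hθ
  have hsθ : 0 < Real.sin θ := Real.sin_pos_of_pos_of_lt_pi hθ0 (lt_of_le_of_lt hθπ (by linarith [Real.pi_pos]))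
  have hs₁ : 0 < Real.sin r₁ := Real.sin_pos_of_pos_of_lt_pi hr₁0 (by linarith [Real.pi_pos])
  have hc₁ : 0 < Real.cos r₁ := Real.cos_pos_of_mem_Ioo ⟨by linarith, hr₁π⟩
  have hk₁pos : 0 < k₁ := by
    rw [hk₁, Real.cot_eq_cos_div_sin]
    positivity
  have hk₂pos : 0 < k₂ := by
    rw [hk₂, Real.cot_eq_cos_div_sin]
    have : 0 < Real.sin r₂ := Real.sin_pos_of_pos_of_lt_pi hr₂0 (by linarith [Real.pi_pos])
    have : 0 < Real.cos r₂ := Real.cos_pos_of_mem_Ioo ⟨by linarith, hr₂π⟩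
    positivity
  set u : ℝ := (k₂ * Real.sin r₁ + Real.cos r₁ * Real.cos θ) / Real.sin θ with hu
  have hexp : Real.exp (Real.log k₂) = k₂ := Real.exp_log hk₂pos
  have h1u : (0:ℝ) < 1 + u ^ 2 := by positivity
  -- sin β₁ squared
  have hsinβ : Real.sin β₁ = 1 / Real.sqrt (1 + u ^ 2) := by
    rw [hβ₁]
    show Real.sin (π / 2 - Real.arctan u) = _
    rw [Real.sin_pi_div_two_sub, Real.cos_arctan]
  have hsinβsq : (Real.sin β₁) ^ 2 = 1 / (1 + u ^ 2) := by
    rw [hsinβ, div_pow, one_pow, Real.sq_sqrt h1u.le]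
  -- derivative of inner function
  have hg : HasDerivAt (fun K : ℝ =>
      (Real.exp K * Real.sin r₁ + Real.cos r₁ * Real.cos θ) / Real.sin θ)
      (k₂ * Real.sin r₁ / Real.sin θ) (Real.log k₂) := by
    have h := (((Real.hasDerivAt_exp (Real.log k₂)).mul_const (Real.sin r₁)).add_const
      (Real.cos r₁ * Real.cos θ)).div_const (Real.sin θ)
    rwa [hexp] at h
  have harctan : HasDerivAt Real.arctan (1 / (1 + u ^ 2)) u := Real.hasDerivAt_arctan u
  have hval : ((k₂ * Real.sin r₁ + Real.cos r₁ * Real.cos θ) / Real.sin θ) = u := rfl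
  have harccot : HasDerivAt (fun K : ℝ =>
      arccot ((Real.exp K * Real.sin r₁ + Real.cos r₁ * Real.cos θ) / Real.sin θ))
      (-(1 / (1 + u ^ 2) * (k₂ * Real.sin r₁ / Real.sin θ))) (Real.log k₂) := by
    have hcomp : HasDerivAt (fun K : ℝ =>
        Real.arctan ((Real.exp K * Real.sin r₁ + Real.cos r₁ * Real.cos θ) / Real.sin θ))
        (1 / (1 + u ^ 2) * (k₂ * Real.sin r₁ / Real.sin θ)) (Real.log k₂) := by
      have harctan' : HasDerivAt Real.arctan (1 / (1 + u ^ 2))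
          ((Real.exp (Real.log k₂) * Real.sin r₁ + Real.cos r₁ * Real.cos θ) / Real.sin θ) := by
        rw [hexp]; exact harctan
      exact harctan'.comp (Real.log k₂) hg
    simpa [arccot, Pi.sub_def] using (hasDerivAt_const (Real.log k₂) (π / 2)).sub hcomp
  have hL : HasDerivAt L₁
      (k₁ * (2 * -(1 / (1 + u ^ 2) * (k₂ * Real.sin r₁ / Real.sin θ)) * Real.sin r₁))
      (Real.log k₂) := by
    have hfun : L₁ = fun K => k₁ *
        (2 * arccot ((Real.exp K * Real.sin r₁ + Real.cos r₁ * Real.cos θ) / Real.sin θ)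
          * Real.sin r₁) := funext hL₁
    rw [hfun]
    exact (((harccot.const_mul 2).mul_const (Real.sin r₁)).const_mul k₁)
  have heq : k₁ * (2 * -(1 / (1 + u ^ 2) * (k₂ * Real.sin r₁ / Real.sin θ)) * Real.sin r₁)
      = k₁ * k₂ * (-2 * (Real.sin β₁)^2 * (Real.sin r₁)^2) / Real.sin θ := by
    rw [hsinβsq]
    field_simp
  constructor
  · rw [← heq]; exact hL
  · rw [← heq]
    have : 0 < 1 / (1 + u ^ 2) * (k₂ * Real.sin r₁ / Real.sin θ) := by positivity
    nlinarith [hk₁pos, hs₁, this, mul_pos hs₁ this]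
end

section
/- On a spherical bigon, ∂(L₁+L₂)/∂K₁ = cos(r₁)·sin²(r₁)·(2β₁ − sin(2β₁)), which is strictly positive for r₁ ∈ (0, π/2) and β₁ ∈ (0, π). -/
open Real Set

lemma arccot_pos (x : ℝ) : 0 < arccot x := by
  have := Real.arctan_lt_pi_div_two x
  unfold arccot; linarith

lemma sin_arccot (x : ℝ) : Real.sin (arccot x) = 1 / Real.sqrt (1 + x ^ 2) := by
  unfold arccot; rw [Real.sin_pi_div_two_sub, Real.cos_arctan]

lemma cos_arccot (x : ℝ) : Real.cos (arccot x) = x / Real.sqrt (1 + x ^ 2) := by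
  unfold arccot; rw [Real.cos_pi_div_two_sub, Real.sin_arctan]

lemma arccot_cot {r : ℝ} (h0 : 0 < r) (h2 : r < π / 2) : arccot (Real.cot r) = r := by
  have hs : Real.sin r ≠ 0 := ne_of_gt (Real.sin_pos_of_pos_of_lt_pi h0 (by linarith [Real.pi_pos]))
  have hc : Real.cos r ≠ 0 := ne_of_gt (Real.cos_pos_of_mem_Ioo ⟨by linarith, h2⟩)
  have ht : Real.cot r = Real.tan (π / 2 - r) := by
    rw [Real.tan_pi_div_two_sub, Real.cot_eq_cos_div_sin, Real.tan_eq_sin_div_cos, inv_div]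
  unfold arccot
  rw [ht, Real.arctan_tan (by linarith) (by linarith)]
  ring

/-- On a spherical bigon, with `K₂` fixed and `K₁ = ln (cot r₁)` varying,
`∂(L₁+L₂)/∂K₁ = cos r₁ · sin² r₁ · (2β₁ - sin 2β₁)`, which is strictly positive. -/
theorem dL1_plus_L2_dK1_pos (r₁ r₂ θ k₂ β₁ : ℝ)
    (hr₁ : r₁ ∈ Ioo 0 (π / 2)) (hr₂ : r₂ ∈ Ioo 0 (π / 2)) (hθ : θ ∈ Ioc 0 (π / 2))
    (hk₂ : k₂ = Real.cot r₂)
    (hβ₁ : β₁ = arccot ((k₂ * Real.sin r₁ + Real.cos r₁ * Real.cos θ) / Real.sin θ))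
    (F : ℝ → ℝ)
    (hF : ∀ K : ℝ, F K =
      -- L₁ as a function of K₁ = K (with r₁ = arccot (exp K)):
      Real.exp K *
        (2 * arccot ((k₂ * Real.sin (arccot (Real.exp K))
            + Real.cos (arccot (Real.exp K)) * Real.cos θ) / Real.sin θ)
          * Real.sin (arccot (Real.exp K)))
      -- plus L₂ as a function of K₁ = K (with k₁ = exp K, r₂ fixed):
      + k₂ *
        (2 * arccot ((Real.exp K * Real.sin r₂ + Real.cos r₂ * Real.cos θ) / Real.sin θ)
          * Real.sin r₂)) :
    HasDerivAt F (Real.cos r₁ * (Real.sin r₁)^2 * (2 * β₁ - Real.sin (2 * β₁)))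
      (Real.log (Real.cot r₁)) ∧
    0 < Real.cos r₁ * (Real.sin r₁)^2 * (2 * β₁ - Real.sin (2 * β₁)) := by
  obtain ⟨hr₁0, hr₁2⟩ := hr₁
  obtain ⟨hr₂0, hr₂2⟩ := hr₂
  obtain ⟨hθ0, hθ2⟩ := hθ
  have hpi := Real.pi_pos
  have hs₁ : 0 < Real.sin r₁ := Real.sin_pos_of_pos_of_lt_pi hr₁0 (by linarith)
  have hc₁ : 0 < Real.cos r₁ := Real.cos_pos_of_mem_Ioo ⟨by linarith, hr₁2⟩
  have hs₂ : 0 < Real.sin r₂ := Real.sin_pos_of_pos_of_lt_pi hr₂0 (by linarith)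
  have hc₂ : 0 < Real.cos r₂ := Real.cos_pos_of_mem_Ioo ⟨by linarith, hr₂2⟩
  have hsθ : 0 < Real.sin θ := Real.sin_pos_of_pos_of_lt_pi hθ0 (by linarith)
  have hpy1 : Real.sin r₁ ^ 2 + Real.cos r₁ ^ 2 = 1 := Real.sin_sq_add_cos_sq r₁
  have hpy2 : Real.sin r₂ ^ 2 + Real.cos r₂ ^ 2 = 1 := Real.sin_sq_add_cos_sq r₂
  have hpyθ : Real.sin θ ^ 2 + Real.cos θ ^ 2 = 1 := Real.sin_sq_add_cos_sq θ
  set k₁ := Real.cot r₁ with hk₁def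
  have hk₁ : k₁ = Real.cos r₁ / Real.sin r₁ := Real.cot_eq_cos_div_sin r₁
  have hk₂' : k₂ = Real.cos r₂ / Real.sin r₂ := by rw [hk₂, Real.cot_eq_cos_div_sin]
  have hk₁pos : 0 < k₁ := by rw [hk₁]; positivity
  set K₀ := Real.log k₁ with hK₀def
  have hK0 : Real.exp K₀ = k₁ := Real.exp_log hk₁pos
  have harc : arccot (Real.exp K₀) = r₁ := by rw [hK0]; exact arccot_cot hr₁0 hr₁2
  set u₀ : ℝ := (k₂ * Real.sin r₁ + Real.cos r₁ * Real.cos θ) / Real.sin θ with hu₀def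
  set v₀ : ℝ := (k₁ * Real.sin r₂ + Real.cos r₂ * Real.cos θ) / Real.sin θ with hv₀def
  -- positivity part
  have hβpos : 0 < β₁ := by rw [hβ₁]; exact arccot_pos _
  have hpos : 0 < Real.cos r₁ * (Real.sin r₁)^2 * (2 * β₁ - Real.sin (2 * β₁)) := by
    have := Real.sin_lt (x := 2 * β₁) (by linarith)
    have h2 : 0 < 2 * β₁ - Real.sin (2 * β₁) := by linarith
    positivity
  refine ⟨?_, hpos⟩
  -- derivative part
  have hexp : HasDerivAt Real.exp k₁ K₀ := by
    simpa [hK0] using Real.hasDerivAt_exp K₀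
  have hrd : HasDerivAt (fun K => arccot (Real.exp K)) (-(Real.sin r₁ * Real.cos r₁)) K₀ := by
    have h := (hasDerivAt_arccot (Real.exp K₀)).comp K₀ (Real.hasDerivAt_exp K₀)
    rw [hK0] at h
    have hval : -(1 / (1 + k₁ ^ 2)) * k₁ = -(Real.sin r₁ * Real.cos r₁) := by
      rw [hk₁]
      have hs := ne_of_gt hs₁
      field_simp
      nlinarith [hpy1]
    rw [hval] at h
    exact h
  have hsinr : HasDerivAt (fun K => Real.sin (arccot (Real.exp K)))
      (Real.cos r₁ * -(Real.sin r₁ * Real.cos r₁)) K₀ := by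
    have h := (Real.hasDerivAt_sin (arccot (Real.exp K₀))).comp K₀ hrd
    rw [harc] at h
    exact h
  have hcosr : HasDerivAt (fun K => Real.cos (arccot (Real.exp K)))
      (-Real.sin r₁ * -(Real.sin r₁ * Real.cos r₁)) K₀ := by
    have h := (Real.hasDerivAt_cos (arccot (Real.exp K₀))).comp K₀ hrd
    rw [harc] at h
    exact h
  have hu : HasDerivAt
      (fun K => (k₂ * Real.sin (arccot (Real.exp K))
        + Real.cos (arccot (Real.exp K)) * Real.cos θ) / Real.sin θ)
      ((k₂ * (Real.cos r₁ * -(Real.sin r₁ * Real.cos r₁))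
        + (-Real.sin r₁ * -(Real.sin r₁ * Real.cos r₁)) * Real.cos θ) / Real.sin θ) K₀ :=
    ((hsinr.const_mul k₂).add (hcosr.mul_const (Real.cos θ))).div_const (Real.sin θ)
  have hu0 : (k₂ * Real.sin (arccot (Real.exp K₀))
      + Real.cos (arccot (Real.exp K₀)) * Real.cos θ) / Real.sin θ = u₀ := by
    rw [harc]
  have hb : HasDerivAt
      (fun K => arccot ((k₂ * Real.sin (arccot (Real.exp K))
        + Real.cos (arccot (Real.exp K)) * Real.cos θ) / Real.sin θ))
      (-(1 / (1 + u₀ ^ 2)) * ((k₂ * (Real.cos r₁ * -(Real.sin r₁ * Real.cos r₁))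
        + (-Real.sin r₁ * -(Real.sin r₁ * Real.cos r₁)) * Real.cos θ) / Real.sin θ)) K₀ := by
    have h := (hasDerivAt_arccot _).comp K₀ hu
    rw [hu0] at h
    exact h
  have h23 := (hb.const_mul 2).mul hsinr
  rw [hu0, harc, ← hβ₁] at h23
  have hf₁ := hexp.mul h23
  rw [hK0] at hf₁
  -- hf₁ function value at K₀ inside derivative already rewritten? the `(2 * arccot ... * sin ...) K₀`
  have hv : HasDerivAt
      (fun K => (Real.exp K * Real.sin r₂ + Real.cos r₂ * Real.cos θ) / Real.sin θ)
      ((k₁ * Real.sin r₂) / Real.sin θ) K₀ :=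
    ((hexp.mul_const (Real.sin r₂)).add_const (Real.cos r₂ * Real.cos θ)).div_const (Real.sin θ)
  have hv0 : (Real.exp K₀ * Real.sin r₂ + Real.cos r₂ * Real.cos θ) / Real.sin θ = v₀ := by
    rw [hK0]
  have hb2 : HasDerivAt
      (fun K => arccot ((Real.exp K * Real.sin r₂ + Real.cos r₂ * Real.cos θ) / Real.sin θ))
      (-(1 / (1 + v₀ ^ 2)) * ((k₁ * Real.sin r₂) / Real.sin θ)) K₀ := by
    have h := (hasDerivAt_arccot _).comp K₀ hv
    rw [hv0] at h
    exact h
  have hf₂ := ((hb2.const_mul 2).mul_const (Real.sin r₂)).const_mul k₂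
  have htot := hf₁.add hf₂
  have hFeq : F = fun K =>
      Real.exp K *
        (2 * arccot ((k₂ * Real.sin (arccot (Real.exp K))
            + Real.cos (arccot (Real.exp K)) * Real.cos θ) / Real.sin θ)
          * Real.sin (arccot (Real.exp K)))
      + k₂ *
        (2 * arccot ((Real.exp K * Real.sin r₂ + Real.cos r₂ * Real.cos θ) / Real.sin θ)
          * Real.sin r₂) := funext hF
  rw [hFeq]
  convert htot using 1
  · rfl
  · rfl
  · rfl
  simp only [Pi.mul_apply, hK0]
  -- equality of the derivative values
  have harc' : arccot k₁ = r₁ := arccot_cot hr₁0 hr₁2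
  rw [harc', ← hu₀def, ← hβ₁]
  clear hF hFeq htot hf₁ hf₂ h23 hb hb2 hu hv hsinr hcosr hrd hexp hu0 hv0 harc harc' F
  clear_value k₁ K₀ u₀ v₀
  have hP : (0:ℝ) < 1 + u₀ ^ 2 := by positivity
  have hQ : (0:ℝ) < 1 + v₀ ^ 2 := by positivity
  have key : Real.sin r₁ ^ 2 * (1 + v₀ ^ 2) = Real.sin r₂ ^ 2 * (1 + u₀ ^ 2) := by
    rw [hu₀def, hv₀def, hk₁, hk₂']
    field_simp
    ring_nf
    linear_combination (Real.sin θ^2*Real.sin r₂^2) * hpy1 - (Real.sin θ^2*Real.sin r₁^2) * hpy2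
      - (Real.cos r₁^2*Real.sin r₂^2 - Real.sin r₁^2*Real.cos r₂^2) * hpyθ
  have hsin2 : Real.sin (2 * β₁) = 2 * u₀ / (1 + u₀ ^ 2) := by
    have hss : Real.sqrt (1 + u₀ ^ 2) * Real.sqrt (1 + u₀ ^ 2) = 1 + u₀ ^ 2 :=
      Real.mul_self_sqrt (by positivity)
    rw [Real.sin_two_mul, hβ₁, sin_arccot, cos_arccot]
    rw [show 2 * (1 / Real.sqrt (1 + u₀ ^ 2)) * (u₀ / Real.sqrt (1 + u₀ ^ 2))
        = 2 * u₀ / (Real.sqrt (1 + u₀ ^ 2) * Real.sqrt (1 + u₀ ^ 2)) from by ring, hss]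
  obtain ⟨A, hA⟩ : ∃ A : ℝ, A = 1 / (1 + u₀ ^ 2) := ⟨_, rfl⟩
  have hsin2' : Real.sin (2 * β₁) = 2 * u₀ * A := by rw [hsin2, hA]; ring
  have hQinv : 1 / (1 + v₀ ^ 2) = Real.sin r₁ ^ 2 * A / Real.sin r₂ ^ 2 := by
    rw [hA, div_eq_div_iff (ne_of_gt hQ) (by positivity)]
    field_simp
    linear_combination -key
  have hck : Real.cos r₁ = k₁ * Real.sin r₁ := by rw [hk₁]; field_simp
  have hust : u₀ * Real.sin θ = k₂ * Real.sin r₁ + Real.cos r₁ * Real.cos θ := by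
    rw [hu₀def]; field_simp
  rw [hsin2', hQinv, ← hA]
  field_simp
  linear_combination (Real.sin r₁*Real.sin θ*(β₁ - u₀*A)) * hck
      - (k₁*Real.sin r₁^2*A) * hust - (k₁*(Real.sin r₁*A*k₂ - β₁*Real.sin θ)) * hpy1
end

section
/- The 1-form ω = L₁ dK₁ + L₂ dK₂ on ℝ² is closed, i.e., ∂L₁/∂K₂ = ∂L₂/∂K₁, for total geodesic curvatures of a spherical bigon. -/
open Real Set

lemma derivL (C D a b s : ℝ) (hs : s ≠ 0) (K : ℝ) :
    deriv (fun K => C * (2 * arccot ((Real.exp K * a + b) / s) * D)) K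
      = C * (2 * (-(Real.exp K * a / s) / (1 + ((Real.exp K * a + b) / s) ^ 2)) * D) := by
  have hg : HasDerivAt (fun K => (Real.exp K * a + b) / s) (Real.exp K * a / s) K := by
    simpa [← add_div, mul_div_assoc] using
      (((Real.hasDerivAt_exp K).mul_const a).add_const b).div_const s
  have harctan := Real.hasDerivAt_arctan ((Real.exp K * a + b) / s)
  have h2 : HasDerivAt (fun K => arccot ((Real.exp K * a + b) / s))
      (-(1 / (1 + ((Real.exp K * a + b) / s) ^ 2)) * (Real.exp K * a / s)) K := by
    unfold arccot
    simpa [Function.comp, neg_mul] using ((harctan.comp K hg).const_sub (π / 2))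
  have h3 := ((h2.const_mul 2).mul_const D).const_mul C
  have := h3.deriv
  convert this using 2
  ring

/-- The 1-form `ω = L₁ dK₁ + L₂ dK₂` is closed: `∂L₁/∂K₂ = ∂L₂/∂K₁`, where
`Lᵢ = cot rᵢ · 2βᵢ sin rᵢ` are the total geodesic curvatures of a spherical bigon,
parametrized by `Kᵢ = ln (cot rᵢ)`, with intersection angle `θ` fixed. -/
theorem one_form_closed (r₁ r₂ θ : ℝ)
    (hr₁ : r₁ ∈ Ioo 0 (π / 2)) (hr₂ : r₂ ∈ Ioo 0 (π / 2)) (hθ : θ ∈ Ioc 0 (π / 2))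
    (L₁ L₂ : ℝ → ℝ)
    -- L₁ as a function of K₂ (with r₁ fixed):
    (hL₁ : ∀ K : ℝ, L₁ K = Real.cot r₁ *
      (2 * arccot ((Real.exp K * Real.sin r₁ + Real.cos r₁ * Real.cos θ) / Real.sin θ)
        * Real.sin r₁))
    -- L₂ as a function of K₁ (with r₂ fixed):
    (hL₂ : ∀ K : ℝ, L₂ K = Real.cot r₂ *
      (2 * arccot ((Real.exp K * Real.sin r₂ + Real.cos r₂ * Real.cos θ) / Real.sin θ)
        * Real.sin r₂)) :
    deriv L₁ (Real.log (Real.cot r₂)) = deriv L₂ (Real.log (Real.cot r₁)) := by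
  have hs1 : 0 < Real.sin r₁ := Real.sin_pos_of_pos_of_lt_pi hr₁.1 (hr₁.2.trans (by linarith [Real.pi_pos]))
  have hs2 : 0 < Real.sin r₂ := Real.sin_pos_of_pos_of_lt_pi hr₂.1 (hr₂.2.trans (by linarith [Real.pi_pos]))
  have hc1 : 0 < Real.cos r₁ := Real.cos_pos_of_mem_Ioo ⟨by linarith [hr₁.1, Real.pi_pos], hr₁.2⟩
  have hc2 : 0 < Real.cos r₂ := Real.cos_pos_of_mem_Ioo ⟨by linarith [hr₂.1, Real.pi_pos], hr₂.2⟩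
  have hsθ : 0 < Real.sin θ := Real.sin_pos_of_pos_of_lt_pi hθ.1 (lt_of_le_of_lt hθ.2 (by linarith [Real.pi_pos]))
  have hcot1 : 0 < Real.cot r₁ := by rw [Real.cot_eq_cos_div_sin]; positivity
  have hcot2 : 0 < Real.cot r₂ := by rw [Real.cot_eq_cos_div_sin]; positivity
  rw [show L₁ = _ from funext hL₁, show L₂ = _ from funext hL₂,
    derivL _ _ _ _ _ hsθ.ne', derivL _ _ _ _ _ hsθ.ne',
    Real.exp_log hcot1, Real.exp_log hcot2]
  rw [Real.cot_eq_cos_div_sin r₁, Real.cot_eq_cos_div_sin r₂]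
  have p1 := Real.sin_sq_add_cos_sq r₁
  have p2 := Real.sin_sq_add_cos_sq r₂
  set s1 := Real.sin r₁; set c1 := Real.cos r₁
  set s2 := Real.sin r₂; set c2 := Real.cos r₂
  set sθ := Real.sin θ; set cθ := Real.cos θ
  have hd1 : (1 + ((c2 / s2 * s1 + c1 * cθ) / sθ) ^ 2) ≠ 0 := by positivity
  have hd2 : (1 + ((c1 / s1 * s2 + c2 * cθ) / sθ) ^ 2) ≠ 0 := by positivity
  field_simp
  ring_nf
  have pθ := Real.sin_sq_add_cos_sq θ
  linear_combination (-1 : ℝ) * (sθ^2*s2^2 * p1 - sθ^2*s1^2 * p2 + (c2^2*s1^2 - c1^2*s2^2) * pθ)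
end

section
/- The 2×2 Jacobian matrix (∂Lᵢ/∂Kⱼ) of the total geodesic curvatures of a spherical bigon is symmetric and positive definite: its off-diagonal entries are negative, and each row sum ∂(L₁+L₂)/∂Kᵢ is positive, hence it is strictly diagonally dominant with positive diagonal. -/
open Real Set

/-- Total geodesic curvature `L₁` of the first circle of a spherical bigon, as a
function of `(K₁, K₂)` where `Kᵢ = ln (cot rᵢ)`, with intersection angle `θ`. -/
noncomputable def Lone (θ K₁ K₂ : ℝ) : ℝ :=
  Real.exp K₁ *
    (2 * arccot ((Real.exp K₂ * Real.sin (arccot (Real.exp K₁))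
        + Real.cos (arccot (Real.exp K₁)) * Real.cos θ) / Real.sin θ)
      * Real.sin (arccot (Real.exp K₁)))

/-- The Jacobian matrix `(∂Lᵢ/∂Kⱼ)` of the total geodesic curvatures of a
spherical bigon. -/
noncomputable def bigonJacobian (θ K₁ K₂ : ℝ) : Matrix (Fin 2) (Fin 2) ℝ :=
  !![deriv (fun K => Lone θ K K₂) K₁, deriv (fun K => Lone θ K₁ K) K₂;
     deriv (fun K => Lone θ K₂ K) K₁, deriv (fun K => Lone θ K K₁) K₂]


lemma sqrt1_pos (x : ℝ) : 0 < Real.sqrt (1 + x ^ 2) := Real.sqrt_pos.2 (by positivity)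

lemma sqrt1_sq (x : ℝ) : Real.sqrt (1 + x ^ 2) ^ 2 = 1 + x ^ 2 := Real.sq_sqrt (by positivity)

lemma arctan_gt {x : ℝ} (hx : 0 < x) : x / (1 + x ^ 2) < Real.arctan x := by
  have key : StrictMonoOn (fun y : ℝ => Real.arctan y - y / (1 + y ^ 2)) (Ici 0) := by
    apply strictMonoOn_of_deriv_pos (convex_Ici 0)
    · apply Continuous.continuousOn
      exact Real.continuous_arctan.sub
        (continuous_id.div (by continuity) (fun y => by positivity))
    · intro y hy
      rw [interior_Ici] at hy
      have h1 : (0:ℝ) < 1 + y ^ 2 := by positivity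
      have hq : HasDerivAt (fun y : ℝ => y / (1 + y ^ 2))
          ((1 * (1 + y ^ 2) - y * (2 * y ^ 1)) / (1 + y ^ 2) ^ 2) y :=
        (hasDerivAt_id y).div ((hasDerivAt_pow 2 y).const_add 1 |>.congr_deriv (by norm_num)) h1.ne'
      have hd := (Real.hasDerivAt_arctan y).sub hq
      rw [(show HasDerivAt (fun y : ℝ => Real.arctan y - y / (1 + y ^ 2)) _ y from hd).deriv]
      rw [show 1 / (1 + y ^ 2) - (1 * (1 + y ^ 2) - y * (2 * y ^ 1)) / (1 + y ^ 2) ^ 2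
          = 2 * y ^ 2 / (1 + y ^ 2) ^ 2 by field_simp; ring]
      have hy0 : y ≠ 0 := ne_of_gt hy
      positivity
  have h := key (self_mem_Ici) (mem_Ici.2 hx.le) hx
  simpa using h

lemma arccot_gt {A : ℝ} (hA : 0 < A) : A / (1 + A ^ 2) < arccot A := by
  have h1 := arctan_gt (show 0 < A⁻¹ by positivity)
  rw [Real.arctan_inv_of_pos hA] at h1
  have h2 : A⁻¹ / (1 + A⁻¹ ^ 2) = A / (1 + A ^ 2) := by
    field_simp
    ring
  rw [h2] at h1
  exact h1

lemma lone_eq (θ K₁ K₂ : ℝ) :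
    Lone θ K₁ K₂ = 2 * (Real.exp K₁ / Real.sqrt (1 + Real.exp K₁ ^ 2)) *
      arccot ((Real.exp K₂ + Real.exp K₁ * Real.cos θ) /
        (Real.sqrt (1 + Real.exp K₁ ^ 2) * Real.sin θ)) := by
  have hw := (sqrt1_pos (Real.exp K₁)).ne'
  rw [Lone, sin_arccot, cos_arccot]
  rw [show Real.exp K₂ * (1 / Real.sqrt (1 + Real.exp K₁ ^ 2))
      + Real.exp K₁ / Real.sqrt (1 + Real.exp K₁ ^ 2) * Real.cos θ
      = (Real.exp K₂ + Real.exp K₁ * Real.cos θ) / Real.sqrt (1 + Real.exp K₁ ^ 2) by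
    field_simp]
  rw [div_div]
  ring

lemma hasDerivAt_lone_snd (θ K₁ K₂ : ℝ) (hs : Real.sin θ ≠ 0) :
    HasDerivAt (fun K => Lone θ K₁ K)
      (-(2 * Real.exp K₁ * Real.exp K₂ * Real.sin θ) /
        (Real.sin θ ^ 2 + Real.exp K₁ ^ 2 + Real.exp K₂ ^ 2 +
          2 * Real.exp K₁ * Real.exp K₂ * Real.cos θ)) K₂ := by
  set u := Real.exp K₁ with hu'
  set v := Real.exp K₂ with hv'
  set s := Real.sin θ
  set c := Real.cos θ
  set w := Real.sqrt (1 + u ^ 2) with hwdef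
  have hw0 : 0 < w := sqrt1_pos u
  have hw2 : w ^ 2 = 1 + u ^ 2 := sqrt1_sq u
  have hsc : s ^ 2 + c ^ 2 = 1 := Real.sin_sq_add_cos_sq θ
  have hu : 0 < u := Real.exp_pos _
  have hv : 0 < v := Real.exp_pos _
  have hc1 : -1 ≤ c := Real.neg_one_le_cos θ
  have hs2 : 0 < s ^ 2 := by positivity
  have hD : 0 < s ^ 2 + u ^ 2 + v ^ 2 + 2 * u * v * c := by
    nlinarith [sq_nonneg (u - v), mul_nonneg (mul_pos hu hv).le (by linarith : (0:ℝ) ≤ c + 1)]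
  have hfun : (fun K => Lone θ K₁ K)
      = fun K => 2 * (u / w) * arccot ((Real.exp K + u * c) / (w * s)) := by
    funext K; rw [lone_eq]
  rw [hfun]
  have hA : HasDerivAt (fun K => (Real.exp K + u * c) / (w * s)) (v / (w * s)) K₂ :=
    ((Real.hasDerivAt_exp K₂).add_const (u * c)).div_const (w * s)
  have h2 := ((hasDerivAt_arccot ((v + u * c) / (w * s))).comp K₂ hA).const_mul (2 * (u / w))
  refine h2.congr_deriv (Eq.symm ?_)
  have hDD : s ^ 2 + u ^ 2 + v ^ 2 + 2 * u * v * c = (w * s) ^ 2 + (v + u * c) ^ 2 := by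
    linear_combination (-(s ^ 2)) * hw2 + (-(u ^ 2)) * hsc
  rw [hDD]
  field_simp

lemma hasDerivAt_lone_fst (θ K₁ K₂ : ℝ) (hs : Real.sin θ ≠ 0) :
    HasDerivAt (fun K => Lone θ K K₂)
      (2 * Real.exp K₁ *
          arccot ((Real.exp K₂ + Real.exp K₁ * Real.cos θ) /
            (Real.sqrt (1 + Real.exp K₁ ^ 2) * Real.sin θ)) /
          Real.sqrt (1 + Real.exp K₁ ^ 2) ^ 3
        + 2 * Real.exp K₁ ^ 2 * Real.sin θ *
            (Real.exp K₁ * Real.exp K₂ - Real.cos θ) /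
          (Real.sqrt (1 + Real.exp K₁ ^ 2) ^ 2 *
            (Real.sin θ ^ 2 + Real.exp K₁ ^ 2 + Real.exp K₂ ^ 2 +
              2 * Real.exp K₁ * Real.exp K₂ * Real.cos θ))) K₁ := by
  set u := Real.exp K₁ with hu'
  set v := Real.exp K₂ with hv'
  set s := Real.sin θ
  set c := Real.cos θ
  set w := Real.sqrt (1 + u ^ 2) with hwdef
  have hw0 : 0 < w := sqrt1_pos u
  have hw2 : w ^ 2 = 1 + u ^ 2 := sqrt1_sq u
  have hsc : s ^ 2 + c ^ 2 = 1 := Real.sin_sq_add_cos_sq θ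
  have hu : 0 < u := Real.exp_pos _
  have hv : 0 < v := Real.exp_pos _
  have hc1 : -1 ≤ c := Real.neg_one_le_cos θ
  have hs2 : 0 < s ^ 2 := by positivity
  have hD : 0 < s ^ 2 + u ^ 2 + v ^ 2 + 2 * u * v * c := by
    nlinarith [sq_nonneg (u - v), mul_nonneg (mul_pos hu hv).le (by linarith : (0:ℝ) ≤ c + 1)]
  have hDD : s ^ 2 + u ^ 2 + v ^ 2 + 2 * u * v * c = (w * s) ^ 2 + (v + u * c) ^ 2 := by
    linear_combination (-(s ^ 2)) * hw2 + (-(u ^ 2)) * hsc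
  have hfun : (fun K => Lone θ K K₂)
      = (fun x : ℝ => 2 * (x / Real.sqrt (1 + x ^ 2)) *
          arccot ((v + x * c) / (Real.sqrt (1 + x ^ 2) * s))) ∘ Real.exp := by
    funext K; simp only [Function.comp_apply]; rw [lone_eq]
  rw [hfun]
  -- derivative of sqrt(1+x^2) at u
  have hw' : HasDerivAt (fun x : ℝ => Real.sqrt (1 + x ^ 2)) (u / w) u := by
    have hp : HasDerivAt (fun x : ℝ => 1 + x ^ 2) (2 * u) u :=
      ((hasDerivAt_pow 2 u).const_add 1).congr_deriv (by norm_num)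
    have h := (Real.hasDerivAt_sqrt (show (1:ℝ) + u ^ 2 ≠ 0 by positivity)).comp u hp
    refine h.congr_deriv (Eq.symm ?_)
    rw [← hwdef]
    field_simp
  -- derivative of x / sqrt(1+x^2) at u
  have hq : HasDerivAt (fun x : ℝ => x / Real.sqrt (1 + x ^ 2)) (1 / w ^ 3) u := by
    have h := (hasDerivAt_id u).div hw' hw0.ne'
    refine h.congr_deriv (Eq.symm ?_)
    rw [← hwdef]
    field_simp
    simp only [id_eq]; linear_combination (-1 : ℝ) * hw2
  -- derivative of the arccot argument at u
  have hA : HasDerivAt (fun x : ℝ => (v + x * c) / (Real.sqrt (1 + x ^ 2) * s))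
      ((c - u * v) / (w ^ 3 * s)) u := by
    have hnum : HasDerivAt (fun x : ℝ => v + x * c) c u :=
      (((hasDerivAt_id u).mul_const c).const_add v).congr_deriv (by ring)
    have h := hnum.div (hw'.mul_const s) (mul_ne_zero hw0.ne' hs)
    refine h.congr_deriv (Eq.symm ?_)
    rw [← hwdef]
    field_simp
    linear_combination (-c) * hw2
  have hβ := (hasDerivAt_arccot ((v + u * c) / (w * s))).comp u hA
  have hφ := (hq.const_mul 2).mul hβ
  have h := hφ.comp K₁ (Real.hasDerivAt_exp K₁)
  refine h.congr_deriv (Eq.symm ?_)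
  rw [hDD]
  have hws : w * s ≠ 0 := mul_ne_zero hw0.ne' hs
  simp only [Function.comp_apply, ← hwdef, ← hu']
  field_simp
  ring

lemma rowsum_aux (u v s c : ℝ) (hu : 0 < u) (hv : 0 < v) (hs : 0 < s) (hc : 0 ≤ c)
    (hsc : s ^ 2 + c ^ 2 = 1) :
    0 < 2 * u * arccot ((v + u * c) / (Real.sqrt (1 + u ^ 2) * s)) / Real.sqrt (1 + u ^ 2) ^ 3
      + 2 * u ^ 2 * s * (u * v - c) /
          (Real.sqrt (1 + u ^ 2) ^ 2 * (s ^ 2 + u ^ 2 + v ^ 2 + 2 * u * v * c))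
      + -(2 * u * v * s) / (s ^ 2 + u ^ 2 + v ^ 2 + 2 * u * v * c) := by
  set w := Real.sqrt (1 + u ^ 2) with hwdef
  have hw0 : 0 < w := sqrt1_pos u
  have hw2 : w ^ 2 = 1 + u ^ 2 := sqrt1_sq u
  set D := s ^ 2 + u ^ 2 + v ^ 2 + 2 * u * v * c with hDdef
  have hD : 0 < D := by
    have : 0 ≤ 2 * u * v * c := by positivity
    nlinarith [sq_nonneg s, sq_nonneg u, sq_nonneg v, pow_pos hs 2]
  have hDD : D = (w * s) ^ 2 + (v + u * c) ^ 2 := by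
    rw [hDdef]; linear_combination (-(s ^ 2)) * hw2 + (-(u ^ 2)) * hsc
  have hApos : 0 < (v + u * c) / (w * s) := by positivity
  have hβ := arccot_gt hApos
  have h1A : 1 + ((v + u * c) / (w * s)) ^ 2 = D / (w * s) ^ 2 := by
    rw [hDD]; field_simp
  rw [show (v + u * c) / (w * s) / (1 + ((v + u * c) / (w * s)) ^ 2)
      = w * s * (v + u * c) / D by rw [h1A]; field_simp] at hβ
  have hzero : 2 * u * (w * s * (v + u * c) / D) / w ^ 3
      + 2 * u ^ 2 * s * (u * v - c) / (w ^ 2 * D) + -(2 * u * v * s) / D = 0 := by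
    have e1 : 2 * u * (w * s * (v + u * c) / D) / w ^ 3
        = 2 * u * s * (v + u * c) / (w ^ 2 * D) := by
      field_simp
    have e3 : -(2 * u * v * s) / D = -(2 * u * v * s * w ^ 2) / (w ^ 2 * D) := by
      field_simp
    have hnum : 2 * u * s * (v + u * c) + 2 * u ^ 2 * s * (u * v - c)
        + -(2 * u * v * s * w ^ 2) = 0 := by
      linear_combination (-(2 * u * v * s)) * hw2
    rw [e1, e3, ← add_div, ← add_div, hnum, zero_div]
  have hmono : 2 * u * (w * s * (v + u * c) / D) / w ^ 3
      < 2 * u * arccot ((v + u * c) / (w * s)) / w ^ 3 := by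
    gcongr
  linarith


lemma quad_pos (a b d p q : ℝ) (hb : b < 0) (h1 : 0 < a + b) (h2 : 0 < b + d)
    (hpq : p ≠ 0 ∨ q ≠ 0) : 0 < p * (a * p + b * q) + q * (b * p + d * q) := by
  rcases hpq with h | h
  · have hp2 : 0 < p ^ 2 := by positivity
    nlinarith [mul_pos h1 hp2, mul_nonneg h2.le (sq_nonneg q),
      mul_nonneg (by linarith : (0:ℝ) ≤ -b) (sq_nonneg (p - q))]
  · have hp2 : 0 < q ^ 2 := by positivity
    nlinarith [mul_pos h2 hp2, mul_nonneg h1.le (sq_nonneg p),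
      mul_nonneg (by linarith : (0:ℝ) ≤ -b) (sq_nonneg (p - q))]

open Matrix

/-- The Jacobian matrix `(∂Lᵢ/∂Kⱼ)` of a spherical bigon with radii
`r₁, r₂ ∈ (0, π/2)` and angle `θ ∈ (0, π/2]` is symmetric, has negative
off-diagonal entries and positive row sums (hence is strictly diagonally
dominant with positive diagonal), and is positive definite. -/
theorem bigonJacobian_posDef (r₁ r₂ θ : ℝ)
    (hr₁ : r₁ ∈ Ioo 0 (π / 2)) (hr₂ : r₂ ∈ Ioo 0 (π / 2)) (hθ : θ ∈ Ioc 0 (π / 2))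
    (J : Matrix (Fin 2) (Fin 2) ℝ)
    (hJ : J = bigonJacobian θ (Real.log (Real.cot r₁)) (Real.log (Real.cot r₂))) :
    J.IsSymm ∧ J 0 1 < 0 ∧ J 1 0 < 0 ∧
    0 < J 0 0 + J 0 1 ∧ 0 < J 1 0 + J 1 1 ∧
    (0 < J 0 0 ∧ 0 < J 1 1) ∧ J.PosDef := by
  obtain ⟨hθ0, hθ2⟩ := hθ
  have hπ := Real.pi_pos
  have hs : 0 < Real.sin θ := Real.sin_pos_of_pos_of_lt_pi hθ0 (by linarith)
  have hc : 0 ≤ Real.cos θ := Real.cos_nonneg_of_mem_Icc ⟨by linarith, hθ2⟩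
  have hsc : Real.sin θ ^ 2 + Real.cos θ ^ 2 = 1 := Real.sin_sq_add_cos_sq θ
  set K₁ := Real.log (Real.cot r₁) with hK₁
  set K₂ := Real.log (Real.cot r₂) with hK₂
  have hu : 0 < Real.exp K₁ := Real.exp_pos _
  have hv : 0 < Real.exp K₂ := Real.exp_pos _
  have hD1 : 0 < Real.sin θ ^ 2 + Real.exp K₁ ^ 2 + Real.exp K₂ ^ 2 +
      2 * Real.exp K₁ * Real.exp K₂ * Real.cos θ := by positivity
  have hD2 : 0 < Real.sin θ ^ 2 + Real.exp K₂ ^ 2 + Real.exp K₁ ^ 2 +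
      2 * Real.exp K₂ * Real.exp K₁ * Real.cos θ := by positivity
  have h00 : J 0 0 = deriv (fun K => Lone θ K K₂) K₁ := by rw [hJ, bigonJacobian]; simp
  have h01 : J 0 1 = deriv (fun K => Lone θ K₁ K) K₂ := by rw [hJ, bigonJacobian]; simp
  have h10 : J 1 0 = deriv (fun K => Lone θ K₂ K) K₁ := by rw [hJ, bigonJacobian]; simp
  have h11 : J 1 1 = deriv (fun K => Lone θ K K₁) K₂ := by rw [hJ, bigonJacobian]; simp
  have d00 := (hasDerivAt_lone_fst θ K₁ K₂ hs.ne').deriv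
  have d01 := (hasDerivAt_lone_snd θ K₁ K₂ hs.ne').deriv
  have d10 := (hasDerivAt_lone_snd θ K₂ K₁ hs.ne').deriv
  have d11 := (hasDerivAt_lone_fst θ K₂ K₁ hs.ne').deriv
  -- off-diagonal entries
  have hb : J 0 1 = -(2 * Real.exp K₁ * Real.exp K₂ * Real.sin θ) /
      (Real.sin θ ^ 2 + Real.exp K₁ ^ 2 + Real.exp K₂ ^ 2 +
        2 * Real.exp K₁ * Real.exp K₂ * Real.cos θ) := by rw [h01, d01]
  have hbb : J 1 0 = J 0 1 := by
    rw [h10, d10, hb]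
    ring
  have hbneg : J 0 1 < 0 := by
    rw [hb]
    apply div_neg_of_neg_of_pos _ hD1
    nlinarith [mul_pos (mul_pos hu hv) hs]
  -- row sums
  have hrow1 : 0 < J 0 0 + J 0 1 := by
    rw [h00, d00, h01, d01]
    exact rowsum_aux (Real.exp K₁) (Real.exp K₂) (Real.sin θ) (Real.cos θ) hu hv hs hc hsc
  have hrow2 : 0 < J 1 0 + J 1 1 := by
    rw [h10, d10, h11, d11]
    have := rowsum_aux (Real.exp K₂) (Real.exp K₁) (Real.sin θ) (Real.cos θ) hv hu hs hc hsc
    linarith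
  have hd00 : 0 < J 0 0 := by linarith
  have hd11 : 0 < J 1 1 := by
    have : J 1 0 < 0 := by rw [hbb]; exact hbneg
    linarith
  have hsym : J.IsSymm := by
    apply Matrix.IsSymm.ext
    intro i j
    fin_cases i <;> fin_cases j <;> simp [hbb]
  refine ⟨hsym, hbneg, by rw [hbb]; exact hbneg, hrow1, hrow2, ⟨hd00, hd11⟩, ?_⟩
  refine Matrix.posDef_iff_dotProduct_mulVec.mpr ⟨?_, ?_⟩
  · apply Matrix.IsHermitian.ext
    intro i j
    rw [star_trivial]
    exact hsym.apply i j
  · intro x hx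
    have hq : dotProduct (star x) (J *ᵥ x)
        = x 0 * (J 0 0 * x 0 + J 0 1 * x 1) + x 1 * (J 1 0 * x 0 + J 1 1 * x 1) := by
      simp [dotProduct, Matrix.mulVec, Fin.sum_univ_two]
    have hx01 : x 0 ≠ 0 ∨ x 1 ≠ 0 := by
      by_contra h
      push_neg at h
      exact hx (funext fun i => by fin_cases i <;> simp [h.1, h.2])
    rw [hq, hbb]
    exact quad_pos (J 0 0) (J 0 1) (J 1 1) (x 0) (x 1) hbneg hrow1
      (by rw [hbb] at hrow2; linarith) hx01
end

section
/- If H : ℝᴺ → ℝ is a strictly convex C¹ function with a critical point, then H is proper, i.e., H(x) → ∞ as |x| → ∞. -/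
open Set Filter

/-- A strictly convex differentiable function with vanishing derivative at `P` has a strict
global minimum at `P`. -/
lemma strict_min_aux {N : ℕ} {H : EuclideanSpace ℝ (Fin N) → ℝ}
    (hconv : StrictConvexOn ℝ Set.univ H) (hdiff : ContDiff ℝ 1 H)
    {P : EuclideanSpace ℝ (Fin N)} (hcrit : fderiv ℝ H P = 0)
    {x : EuclideanSpace ℝ (Fin N)} (hx : x ≠ P) : H P < H x := by
  by_contra hle
  push_neg at hle
  -- The midpoint `y` satisfies `H y < H P` strictly.
  set y : EuclideanSpace ℝ (Fin N) := (1/2 : ℝ) • P + (1/2 : ℝ) • x with hy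
  have hylt : H y < H P := by
    have := hconv.2 (Set.mem_univ P) (Set.mem_univ x) (Ne.symm hx)
      (by norm_num : (0:ℝ) < 1/2) (by norm_num : (0:ℝ) < 1/2) (by norm_num)
    calc H y < (1/2) * H P + (1/2) * H x := by simpa [hy, smul_eq_mul] using this
    _ ≤ (1/2) * H P + (1/2) * H P := by linarith
    _ = H P := by ring
  set v : EuclideanSpace ℝ (Fin N) := y - P with hv
  set ε : ℝ := H P - H y with hε
  have hεpos : 0 < ε := by linarith
  -- slope bound along the segment
  have hslope : ∀ t : ℝ, t ∈ Set.Ioc (0:ℝ) 1 → (H (P + t • v) - H P) / t ≤ -ε := by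
    intro t ht
    have hPt : P + t • v = (1 - t) • P + t • y := by
      rw [hv]; module
    have hc := hconv.convexOn.2 (Set.mem_univ P) (Set.mem_univ y)
      (by linarith [ht.2] : (0:ℝ) ≤ 1 - t) (le_of_lt ht.1) (by ring)
    rw [← hPt] at hc
    simp only [smul_eq_mul] at hc
    rw [div_le_iff₀ ht.1]
    nlinarith [ht.1, ht.2]
  -- derivative of `t ↦ H (P + t • v)` at `0` is `0`
  have hdH : HasFDerivAt H (0 : EuclideanSpace ℝ (Fin N) →L[ℝ] ℝ) P := by
    have := (hdiff.differentiable one_ne_zero P).hasFDerivAt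
    rwa [hcrit] at this
  have hcurve : HasDerivAt (fun t : ℝ => P + t • v) v 0 := by
    simpa using ((hasDerivAt_id (0:ℝ)).smul_const v).const_add P
  have hd : HasDerivAt (fun t : ℝ => H (P + t • v)) 0 0 := by
    have hdH' : HasFDerivAt H (0 : EuclideanSpace ℝ (Fin N) →L[ℝ] ℝ) (P + (0:ℝ) • v) := by
      simpa using hdH
    have h3 := hdH'.comp_hasDerivAt 0 hcurve
    rw [ContinuousLinearMap.zero_apply] at h3
    exact h3
  rw [hasDerivAt_iff_tendsto_slope] at hd
  have hd' : Tendsto (slope (fun t : ℝ => H (P + t • v)) 0) (nhdsWithin 0 (Set.Ioi 0)) (nhds 0) :=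
    hd.mono_left (nhdsWithin_mono _ (fun t ht => ne_of_gt ht))
  have hev : ∀ᶠ t in nhdsWithin (0:ℝ) (Set.Ioi 0),
      slope (fun t : ℝ => H (P + t • v)) 0 t ≤ -ε := by
    filter_upwards [Ioc_mem_nhdsGT_of_mem (by norm_num : (0:ℝ) ∈ Set.Ico (0:ℝ) 1)] with t ht
    have := hslope t ht
    simpa [slope_def_field, div_eq_mul_inv, mul_comm] using this
  have : (0:ℝ) ≤ -ε := le_of_tendsto hd' hev
  linarith

/-- A strictly convex `C¹` function on `ℝᴺ` with a critical point is proper: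
`H(x) → ∞` as `|x| → ∞`. -/
theorem strictConvex_critical_proper {N : ℕ}
    {H : EuclideanSpace ℝ (Fin N) → ℝ}
    (hconv : StrictConvexOn ℝ Set.univ H) (hdiff : ContDiff ℝ 1 H)
    {P : EuclideanSpace ℝ (Fin N)} (hcrit : fderiv ℝ H P = 0) :
    Tendsto H (cocompact (EuclideanSpace ℝ (Fin N))) atTop := by
  rcases Nat.eq_zero_or_pos N with hN | hN
  · subst hN
    haveI : CompactSpace (EuclideanSpace ℝ (Fin 0)) := by infer_instance
    rw [Filter.cocompact_eq_bot]
    exact tendsto_bot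
  -- minimum of `H` on the unit sphere around `P`
  haveI : Nonempty (Fin N) := ⟨⟨0, hN⟩⟩
  have hsph : (Metric.sphere P 1).Nonempty :=
    NormedSpace.sphere_nonempty.2 (by norm_num)
  obtain ⟨y₀, hy₀, hmin⟩ := (isCompact_sphere P 1).exists_isMinOn hsph
    (hdiff.continuous.continuousOn)
  set m : ℝ := H y₀ with hm
  have hy₀P : y₀ ≠ P := by
    intro h
    have : ‖y₀ - P‖ = 1 := mem_sphere_iff_norm.1 hy₀
    rw [h] at this; simp at this
  have hc : 0 < m - H P := by
    have := strict_min_aux hconv hdiff hcrit hy₀P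
    linarith
  -- growth bound
  have key : ∀ x : EuclideanSpace ℝ (Fin N), 1 ≤ ‖x - P‖ →
      H P + ‖x - P‖ * (m - H P) ≤ H x := by
    intro x hx
    have hnorm : (0:ℝ) < ‖x - P‖ := lt_of_lt_of_le one_pos hx
    set t : ℝ := (‖x - P‖)⁻¹ with htdef
    have htpos : 0 < t := inv_pos.2 hnorm
    have ht1 : t ≤ 1 := by
      rw [htdef]
      exact inv_le_one_of_one_le₀ hx
    set z : EuclideanSpace ℝ (Fin N) := P + t • (x - P) with hz
    have hzsphere : z ∈ Metric.sphere P 1 := by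
      rw [mem_sphere_iff_norm]
      have : z - P = t • (x - P) := by rw [hz]; abel
      rw [this, norm_smul]
      simp [htdef, abs_of_pos htpos, inv_mul_cancel₀ (ne_of_gt hnorm)]
    have hmz : m ≤ H z := hmin hzsphere
    have hzconv : H z ≤ (1 - t) * H P + t * H x := by
      have hPt : z = (1 - t) • P + t • x := by rw [hz]; module
      have := hconv.convexOn.2 (Set.mem_univ P) (Set.mem_univ x)
        (by linarith : (0:ℝ) ≤ 1 - t) (le_of_lt htpos) (by ring)
      rw [hPt]
      simpa [smul_eq_mul] using this
    have htmul : t * ‖x - P‖ = 1 := inv_mul_cancel₀ (ne_of_gt hnorm)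
    nlinarith [hmz, hzconv, htpos, hnorm]
  -- conclude
  have h1 : Tendsto (fun x : EuclideanSpace ℝ (Fin N) => ‖x - P‖)
      (cocompact (EuclideanSpace ℝ (Fin N))) atTop := by
    apply tendsto_atTop_mono (fun x => norm_sub_norm_le x P)
    simpa [sub_eq_add_neg] using
      (tendsto_norm_cocompact_atTop (E := EuclideanSpace ℝ (Fin N))).atTop_add tendsto_const_nhds
  have h2 : Tendsto (fun x : EuclideanSpace ℝ (Fin N) => H P + ‖x - P‖ * (m - H P))
      (cocompact (EuclideanSpace ℝ (Fin N))) atTop :=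
    tendsto_atTop_add_const_left _ _ (h1.atTop_mul_const hc)
  refine tendsto_atTop_mono' _ ?_ h2
  filter_upwards [h1.eventually_ge_atTop 1] with x hx
  exact key x hx
end
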